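/- Let μ be a Borel probability measure on ℝ and let f, g : ℝ → ℝ be monotone nondecreasing μ-integrable functions with fg integrable. Then ∫ f·g dμ ≥ (∫ f dμ)·(∫ g dμ) (the Harris/Chebyshev correlation inequality). -/

import Mathlib

open MeasureTheory

/-- Harris/Chebyshev correlation inequality: for a probability measure `μ` on `ℝ` and
nondecreasing integrable functions `f, g` with integrable product,
`∫ f·g dμ ≥ (∫ f dμ)·(∫ g dμ)`. -/
theorem stmt2 (μ : Measure ℝ) [IsProbabilityMeasure μ] (f g : ℝ → ℝ)
    (hf : Monotone f) (hg : Monotone g)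
    (hfi : Integrable f μ) (hgi : Integrable g μ)
    (hfgi : Integrable (fun x => f x * g x) μ) :
    (∫ x, f x * g x ∂μ) ≥ (∫ x, f x ∂μ) * ∫ x, g x ∂μ := by
  set π := μ.prod μ with hπ
  have one_i : Integrable (fun _ : ℝ => (1 : ℝ)) μ := integrable_const 1
  have i1 : Integrable (fun z : ℝ × ℝ => f z.1 * g z.1 * 1) π :=
    hfgi.mul_prod one_i
  have i2 : Integrable (fun z : ℝ × ℝ => f z.1 * g z.2) π := hfi.mul_prod hgi
  have i3 : Integrable (fun z : ℝ × ℝ => g z.1 * f z.2) π := hgi.mul_prod hfi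
  have i4 : Integrable (fun z : ℝ × ℝ => 1 * (f z.2 * g z.2)) π :=
    one_i.mul_prod hfgi
  have hexp : ∀ z : ℝ × ℝ, (f z.1 - f z.2) * (g z.1 - g z.2)
      = f z.1 * g z.1 * 1 - f z.1 * g z.2 - g z.1 * f z.2 + 1 * (f z.2 * g z.2) := by
    intro z; ring
  have hnn : 0 ≤ ∫ z : ℝ × ℝ, (f z.1 - f z.2) * (g z.1 - g z.2) ∂π := by
    refine integral_nonneg fun z => ?_
    show (0:ℝ) ≤ (f z.1 - f z.2) * (g z.1 - g z.2)
    rcases le_total z.1 z.2 with h | h <;> nlinarith [hf h, hg h]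
  have hcalc : ∫ z : ℝ × ℝ, (f z.1 - f z.2) * (g z.1 - g z.2) ∂π
      = 2 * (∫ x, f x * g x ∂μ) - 2 * ((∫ x, f x ∂μ) * ∫ x, g x ∂μ) := by
    have i12 : Integrable (fun z : ℝ × ℝ => f z.1 * g z.1 * 1 - f z.1 * g z.2) π := i1.sub i2
    have i123 : Integrable
        (fun z : ℝ × ℝ => f z.1 * g z.1 * 1 - f z.1 * g z.2 - g z.1 * f z.2) π := i12.sub i3
    simp only [hexp]
    rw [integral_add i123 i4, integral_sub i12 i3,
      integral_sub i1 i2, hπ, integral_prod_mul f g, integral_prod_mul g f,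
      integral_prod_mul (fun x => f x * g x) (fun _ => (1:ℝ)),
      integral_prod_mul (fun _ => (1:ℝ)) (fun x => f x * g x)]
    simp only [integral_const, measure_univ, ENNReal.toReal_one, probReal_univ, smul_eq_mul, one_mul,
      mul_one]
    ring
  rw [hcalc] at hnn
  linarith
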